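/- Let c > 0 and define v_c : [1, ∞) → ℝ by v_c(y) = (1/√c)·sinh(√c·(y − 1) + arcsinh(√c)). Then: (i) v_c(1) = 1 and v_c(y) > 0 for all y ≥ 1, with v_c(y) → ∞ as y → ∞; (ii) v_c(y)·v_c''(y) − v_c'(y)² + 1 = 0 for all y; (iii) for the map u(x + iy) = x + i·v_c(y) into the upper half-plane with hyperbolic metric (F(w) = −2·log(Im w)), the Hopf density is the constant e^{F(u(z))}·u_z(z)·(ū)_z(z) = (1 − v_c'(y)²)/(4·v_c(y)²) = −c/4. -/

import Mathlib

/-- Wirtinger derivative `∂f/∂z = (1/2)(∂f/∂x − i ∂f/∂y)`, defined from the real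
Fréchet derivative. -/
noncomputable def wderiv (f : ℂ → ℂ) (z : ℂ) : ℂ :=
  (fderiv ℝ f z 1 - Complex.I * fderiv ℝ f z Complex.I) / 2

/-- Wirtinger derivative `∂f/∂z̄ = (1/2)(∂f/∂x + i ∂f/∂y)`, defined from the real
Fréchet derivative. -/
noncomputable def wderivBar (f : ℂ → ℂ) (z : ℂ) : ℂ :=
  (fderiv ℝ f z 1 + Complex.I * fderiv ℝ f z Complex.I) / 2

/-- Wolf's one-parameter family for the half-infinite cylinder:
`v_c(y) = (1/√c) sinh(√c (y−1) + arcsinh √c)` satisfies `v_c(1) = 1`, positivity for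
`y ≥ 1`, `v_c → ∞`, the harmonicity ODE `v v'' − v'² + 1 = 0`, and the map
`u(x+iy) = x + i v_c(y)` into the hyperbolic half-plane has constant Hopf density
`(1 − v_c'(y)²)/(4 v_c(y)²) = −c/4`. -/
theorem wolf_half_infinite_cylinder
    (c : ℝ) (hc : 0 < c)
    (v : ℝ → ℝ)
    (hv : v = fun y => (1 / Real.sqrt c)
      * Real.sinh (Real.sqrt c * (y - 1) + Real.arsinh (Real.sqrt c)))
    (F : ℂ → ℝ) (hF : F = fun w => -2 * Real.log w.im)
    (u : ℂ → ℂ) (hu : u = fun z => (z.re : ℂ) + Complex.I * ((v z.im : ℝ) : ℂ)) :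
    (v 1 = 1 ∧ (∀ y : ℝ, 1 ≤ y → 0 < v y)
      ∧ Filter.Tendsto v Filter.atTop Filter.atTop) ∧
    (∀ y : ℝ, v y * deriv (deriv v) y - (deriv v y) ^ 2 + 1 = 0) ∧
    (∀ z : ℂ, 1 ≤ z.im →
      Complex.exp ((F (u z) : ℂ)) * wderiv u z
          * wderiv (fun w => starRingEnd ℂ (u w)) z
        = (((1 - (deriv v z.im) ^ 2) / (4 * (v z.im) ^ 2) : ℝ) : ℂ)
      ∧ Complex.exp ((F (u z) : ℂ)) * wderiv u z
          * wderiv (fun w => starRingEnd ℂ (u w)) z = ((-c / 4 : ℝ) : ℂ)) := by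
  
  subst hv hF hu
  set s : ℝ := Real.sqrt c with hs_def
  have hs : 0 < s := Real.sqrt_pos.mpr hc
  have hs2 : s ^ 2 = c := Real.sq_sqrt hc.le
  set a : ℝ := Real.arsinh s with ha_def
  set g : ℝ → ℝ := fun y => s * (y - 1) + a with hg_def
  set v : ℝ → ℝ := fun y => (1 / s) * Real.sinh (g y) with hv_def
  -- derivative facts
  have hgd : ∀ y : ℝ, HasDerivAt g s y := by
    intro y
    have := (((hasDerivAt_id y).sub_const 1).const_mul s).add_const a
    simpa [hg_def] using this
  have hvd : ∀ y : ℝ, HasDerivAt v (Real.cosh (g y)) y := by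
    intro y
    have h2 := (Real.hasDerivAt_sinh (g y)).comp y (hgd y)
    have h3 := h2.const_mul (1 / s)
    have h4 : 1 / s * (Real.cosh (g y) * s) = Real.cosh (g y) := by field_simp
    rw [h4] at h3
    exact h3
  have hderiv : deriv v = fun y => Real.cosh (g y) := funext fun y => (hvd y).deriv
  have hvd2 : ∀ y : ℝ, HasDerivAt (deriv v) (Real.sinh (g y) * s) y := by
    intro y
    rw [hderiv]
    exact (Real.hasDerivAt_cosh (g y)).comp y (hgd y)
  have hderiv2 : deriv (deriv v) = fun y => Real.sinh (g y) * s :=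
    funext fun y => (hvd2 y).deriv
  have hvpos : ∀ y : ℝ, 1 ≤ y → 0 < v y := by
    intro y hy
    have hgpos : 0 < g y := by
      have h1 : 0 ≤ s * (y - 1) := mul_nonneg hs.le (by linarith)
      have h2 : 0 < a := Real.arsinh_pos_iff.mpr hs
      simp only [hg_def]
      linarith
    exact mul_pos (by positivity) (Real.sinh_pos_iff.mpr hgpos)
  refine ⟨⟨?_, hvpos, ?_⟩, ?_, ?_⟩
  · -- v 1 = 1
    simp only [hv_def, hg_def, ha_def]
    rw [show s * (1 - 1) + Real.arsinh s = Real.arsinh s by ring, Real.sinh_arsinh]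
    field_simp
  · -- tendsto
    have hsinh : Filter.Tendsto Real.sinh Filter.atTop Filter.atTop := by
      apply Filter.tendsto_atTop_mono' _ _ Filter.tendsto_id
      filter_upwards [Filter.eventually_ge_atTop (0:ℝ)] with x hx
      exact Real.self_le_sinh_iff.mpr hx
    have hgt : Filter.Tendsto g Filter.atTop Filter.atTop := by
      apply Filter.tendsto_atTop_add_const_right
      apply Filter.Tendsto.const_mul_atTop hs
      exact Filter.tendsto_atTop_add_const_right _ _ Filter.tendsto_id
    have := (hsinh.comp hgt).const_mul_atTop (show (0:ℝ) < 1 / s by positivity)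
    simpa [hv_def, Function.comp] using this
  · -- ODE
    intro y
    rw [hderiv2, hderiv]
    simp only [hv_def]
    have hcosh := Real.cosh_sq (g y)
    have hsne : s ≠ 0 := hs.ne'
    field_simp
    nlinarith [Real.cosh_sq (g y)]
  · -- Hopf density
    intro z hz
    set t : ℝ := v z.im with ht_def
    have htpos : 0 < t := hvpos _ hz
    set d : ℝ := Real.cosh (g z.im) with hd_def
    -- Fréchet derivative of u
    have hre : HasFDerivAt (fun w : ℂ => ((w.re : ℝ) : ℂ))
        (Complex.ofRealCLM.comp Complex.reCLM) z :=
      (Complex.ofRealCLM.hasFDerivAt).comp z Complex.reCLM.hasFDerivAt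
    have him0 : HasFDerivAt (fun w : ℂ => v w.im) (d • (Complex.imCLM : ℂ →L[ℝ] ℝ)) z :=
      (hvd z.im).comp_hasFDerivAt z Complex.imCLM.hasFDerivAt
    have him1 : HasFDerivAt (fun w : ℂ => ((v w.im : ℝ) : ℂ))
        (Complex.ofRealCLM.comp (d • (Complex.imCLM : ℂ →L[ℝ] ℝ))) z :=
      (Complex.ofRealCLM.hasFDerivAt).comp z him0
    have him : HasFDerivAt (fun w : ℂ => Complex.I * ((v w.im : ℝ) : ℂ))
        (Complex.I • (Complex.ofRealCLM.comp (d • (Complex.imCLM : ℂ →L[ℝ] ℝ)))) z :=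
      him1.const_mul Complex.I
    set L : ℂ →L[ℝ] ℂ :=
      Complex.ofRealCLM.comp Complex.reCLM
        + Complex.I • (Complex.ofRealCLM.comp (d • (Complex.imCLM : ℂ →L[ℝ] ℝ))) with hL_def
    have hU : HasFDerivAt (fun w : ℂ => ((w.re : ℝ) : ℂ) + Complex.I * ((v w.im : ℝ) : ℂ)) L z :=
      hre.add him
    have hUc : HasFDerivAt (fun w : ℂ => starRingEnd ℂ
        (((w.re : ℝ) : ℂ) + Complex.I * ((v w.im : ℝ) : ℂ)))
        ((Complex.conjCLE : ℂ →L[ℝ] ℂ).comp L) z :=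
      (Complex.conjCLE : ℂ →L[ℝ] ℂ).hasFDerivAt.comp z hU
    have hL1 : L 1 = 1 := by
      simp [hL_def, Complex.ext_iff]
    have hLI : L Complex.I = Complex.I * (d : ℂ) := by
      simp [hL_def, Complex.ext_iff]
    have hw1 : wderiv (fun w : ℂ => ((w.re : ℝ) : ℂ) + Complex.I * ((v w.im : ℝ) : ℂ)) z
        = (1 + (d : ℂ)) / 2 := by
      rw [wderiv, hU.fderiv, hL1, hLI]
      ring_nf
      rw [Complex.I_sq]
      ring
    have hw2 : wderiv (fun w : ℂ => starRingEnd ℂ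
        (((w.re : ℝ) : ℂ) + Complex.I * ((v w.im : ℝ) : ℂ))) z
        = (1 - (d : ℂ)) / 2 := by
      rw [wderiv, hUc.fderiv]
      simp only [ContinuousLinearMap.coe_comp', Function.comp_apply, hL1, hLI,
        ContinuousLinearEquiv.coe_coe, Complex.conjCLE_apply, map_one, map_mul,
        Complex.conj_I, Complex.conj_ofReal]
      ring_nf
      rw [Complex.I_sq]
      ring
    -- imaginary part of u z
    have him_u : (((z.re : ℝ) : ℂ) + Complex.I * ((v z.im : ℝ) : ℂ)).im = t := by
      simp [ht_def]
    have hexp : Complex.exp (((-2 * Real.log (((z.re : ℝ) : ℂ)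
        + Complex.I * ((v z.im : ℝ) : ℂ)).im : ℝ) : ℂ)) = ((1 / t ^ 2 : ℝ) : ℂ) := by
      rw [him_u, ← Complex.ofReal_exp]
      congr 1
      rw [show (-2 : ℝ) * Real.log t = -Real.log t + -Real.log t by ring,
        Real.exp_add, Real.exp_neg, Real.exp_log htpos]
      field_simp
    have hderiv_t : deriv v z.im = d := by rw [hderiv]
    have key : ((1 / t ^ 2 : ℝ) : ℂ) * ((1 + (d : ℂ)) / 2) * ((1 - (d : ℂ)) / 2)
        = (((1 - d ^ 2) / (4 * t ^ 2) : ℝ) : ℂ) := by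
      have htne : (t : ℂ) ≠ 0 := Complex.ofReal_ne_zero.mpr htpos.ne'
      push_cast
      field_simp
      ring
    have hreal : (1 - d ^ 2) / (4 * t ^ 2) = -c / 4 := by
      have h1 : d ^ 2 = Real.sinh (g z.im) ^ 2 + 1 := Real.cosh_sq (g z.im)
      have h2 : Real.sinh (g z.im) = s * t := by
        simp only [ht_def, hv_def]
        field_simp
      rw [h1, h2]
      have htne : t ≠ 0 := htpos.ne'
      field_simp
      nlinarith [hs2]
    constructor
    · rw [hexp, hw1, hw2, hderiv_t, key]
    · rw [hexp, hw1, hw2, key, hreal]
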